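/- For every p : P_A B, the function eat∞ p : A^ω → B^ω is continuous: for every α and every n there exists m such that all streams agreeing with α on their first m entries are mapped by eat∞ p to streams agreeing with eat∞ p α on their first n entries. -/

import Mathlib

universe u

/-- The initial algebra `T_A B = μX. B + X^A`: wellfounded trees branching over `A`
with leaves labelled in `B`. -/
inductive T (A : Type u) (B : Type u) : Type u
  | Ret : B → T A B
  | Rd : (A → T A B) → T A B

namespace StreamProc

/-- `eat (Ret b) α = (b, α)`, `eat (Rd φ) (a ∷ α) = eat (φ a) α`. -/
def eat {A B : Type u} : T A B → Stream' A → B × Stream' A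
  | .Ret b, α => (b, α)
  | .Rd φ, α => eat (φ α.head) α.tail

/-- `β` and `α` agree on their first `n` entries. -/
def Agree {A : Type u} (n : ℕ) (α β : Stream' A) : Prop :=
  ∀ i < n, α.get i = β.get i

/-- continuity of a discrete-valued function on streams (product topology of
the discrete topology, expressed concretely via prefixes). -/
def ContD {A B : Type u} (f : Stream' A → B) : Prop :=
  ∀ α, ∃ n, ∀ β, Agree n α β → f β = f α

/-- continuity of a stream-valued function on streams. -/
def ContS {A B : Type u} (f : Stream' A → Stream' B) : Prop :=
  ∀ α n, ∃ m, ∀ β, Agree m α β → Agree n (f α) (f β)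

/-- structural recursion (fold) on `T A B`. -/
def tfold {A B C : Type u} (r : B → C) (g : (A → C) → C) : T A B → C
  | .Ret b => r b
  | .Rd φ => g fun a => tfold r g (φ a)

/-- bind of the free (tree) monad `T_A`: grafting at leaves. -/
def tbind {A B C : Type u} : T A B → (B → T A C) → T A C
  | .Ret b, f => f b
  | .Rd φ, f => .Rd fun a => tbind (φ a) f

/-- bind of the state monad `M_A B = A^ω → B × A^ω`. -/
def mbind {A B C : Type u} (m : Stream' A → B × Stream' A)
    (f : B → Stream' A → C × Stream' A) : Stream' A → C × Stream' A :=
  fun α => f (m α).1 (m α).2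

/-- the type of leaf positions of a tree. -/
def LeafPos {A B : Type u} : T A B → Type u
  | .Ret _ => PUnit
  | .Rd φ => Σ a, LeafPos (φ a)

/-- the polynomial functor whose extension is `X ↦ T A (B × X)`. -/
def PF (A B : Type u) : PFunctor.{u} := ⟨T A B, LeafPos⟩

/-- `P_A B = νX. T_A (B × X)`, realised as an M-type. -/
def P (A B : Type u) : Type u := (PF A B).M

/-- repack a shape and leaf-labelling as a tree with decorated leaves. -/
def decorate {A B X : Type u} : (t : T A B) → (LeafPos t → X) → T A (B × X)
  | .Ret b, f => .Ret (b, f PUnit.unit)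
  | .Rd φ, f => .Rd fun a => decorate (φ a) fun l => f ⟨a, l⟩

/-- split a leaf-decorated tree into a shape and a leaf-labelling. -/
def splitT {A B X : Type u} : T A (B × X) → Σ t : T A B, LeafPos t → X
  | .Ret bx => ⟨.Ret bx.1, fun _ => bx.2⟩
  | .Rd φ => ⟨.Rd fun a => (splitT (φ a)).1, fun l => (splitT (φ l.1)).2 l.2⟩

/-- the structure map `out : P_A B → T_A (B × P_A B)` of the final coalgebra. -/
def Pout {A B : Type u} (p : P A B) : T A (B × P A B) :=
  decorate (PFunctor.M.dest p).1 (PFunctor.M.dest p).2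

/-- corecursion (unfold) into the final coalgebra `P_A B`. -/
def Punfold {A B X : Type u} (c : X → T A (B × X)) : X → P A B :=
  PFunctor.M.corec fun x => splitT (c x)

/-- `eat∞ : P_A B → A^ω → B^ω`: if `eat (out p) α = ((b, p'), α')` then
`eat∞ p α = b ∷ eat∞ p' α'`. -/
def eatInf {A B : Type u} (p : P A B) (α : Stream' A) : Stream' B :=
  Stream'.corec (fun s : P A B × Stream' A => (eat (Pout s.1) s.2).1.1)
    (fun s => ((eat (Pout s.1) s.2).1.2, (eat (Pout s.1) s.2).2)) (p, α)

/-- the `fast-forward` map `ρ`. -/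
def rho {A B C : Type u} : T A B → (Stream' A → C) → T A (B × (Stream' A → C))
  | .Ret b, f => .Ret (b, f)
  | .Rd φ, f => .Rd fun a => rho (φ a) fun α => f (Stream'.cons a α)

/-- `rep∞ = unfold (ρ ∘ τ)` where `τ f = (rep (head ∘ f), tail ∘ f)`. -/
def repInf {A B : Type u} (rep : (Stream' A → B) → T A B) :
    (Stream' A → Stream' B) → P A B :=
  Punfold fun f => rho (rep fun α => (f α).head) fun α => (f α).tail

/-- the carrier of the composition coalgebras. -/
def S' (A B C : Type u) : Type u := T B (C × P B C) × T A (B × P A B)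

/-- the `lazy' composition coalgebra `χ`, as a nested structural recursion
(outer fold on the postponent, inner fold on the preponent). -/
def chi {A B C : Type u} : T B (C × P B C) → T A (B × P A B) → T A (C × S' A B C) :=
  tfold
    (fun cp u => .Ret (cp.1, (Pout cp.2, u)))
    (fun f => tfold (fun bq => f bq.1 (Pout bq.2)) .Rd)

/-- the `greedy' composition coalgebra `χ'`. -/
def chi' {A B C : Type u} : T B (C × P B C) → T A (B × P A B) → T A (C × S' A B C) :=
  tfold
    (fun cp => tfold (fun bq => .Ret (cp.1, (Pout cp.2, .Ret bq))) .Rd)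
    (fun f => tfold (fun bq => f bq.1 (Pout bq.2)) .Rd)

/-- lazy composition on representatives (tree level). -/
def otimesT {A B C : Type u} (t : T B (C × P B C)) (u : T A (B × P A B)) : P A C :=
  Punfold (fun s : S' A B C => chi s.1 s.2) (t, u)

/-- lazy composition `⊗ : P_B C × P_A B → P_A C`. -/
def otimes {A B C : Type u} (p : P B C) (q : P A B) : P A C :=
  otimesT (Pout p) (Pout q)

/-- greedy composition on representatives (tree level). -/
def otimesT' {A B C : Type u} (t : T B (C × P B C)) (u : T A (B × P A B)) : P A C :=
  Punfold (fun s : S' A B C => chi' s.1 s.2) (t, u)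

/-- greedy composition `⊗' : P_B C × P_A B → P_A C`. -/
def otimes' {A B C : Type u} (p : P B C) (q : P A B) : P A C :=
  otimesT' (Pout p) (Pout q)

end StreamProc

namespace StreamProc

lemma eat_cont {A B : Type u} (t : T A B) : ∀ α : Stream' A, ∃ m,
    (eat t α).2 = α.drop m ∧
    ∀ β, Agree m α β → (eat t β).1 = (eat t α).1 ∧ (eat t β).2 = β.drop m := by
  induction t with
  | Ret b =>
    intro α
    exact ⟨0, rfl, fun β _ => ⟨rfl, rfl⟩⟩
  | Rd φ ih =>
    intro α
    obtain ⟨m, hdrop, hm⟩ := ih α.head α.tail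
    refine ⟨m + 1, ?_, ?_⟩
    · show (eat (φ α.head) α.tail).2 = _
      rw [hdrop]; rfl
    · intro β hβ
      have hhead : β.head = α.head := (hβ 0 (Nat.succ_pos m)).symm
      have htail : Agree m α.tail β.tail := fun i hi => hβ (i + 1) (Nat.succ_lt_succ hi)
      have := hm β.tail htail
      show (eat (φ β.head) β.tail).1 = (eat (φ α.head) α.tail).1 ∧
        (eat (φ β.head) β.tail).2 = β.drop (m + 1)
      rw [hhead]
      exact ⟨this.1, this.2⟩

lemma eatInf_head {A B : Type u} (p : P A B) (α : Stream' A) :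
    eatInf p α = Stream'.cons (eat (Pout p) α).1.1
      (eatInf (eat (Pout p) α).1.2 (eat (Pout p) α).2) := by
  unfold eatInf
  rw [Stream'.corec_eq]

lemma agree_drop {A : Type u} {m k : ℕ} {α β : Stream' A}
    (h : Agree (m + k) α β) : Agree k (α.drop m) (β.drop m) := by
  intro i hi
  have := h (m + i) (by omega)
  simpa [Stream'.get_drop] using this

/-- `eat∞ p` is continuous: any finite amount of the output is determined by a
finite amount of the input. -/
theorem stmt8 {A B : Type u} (p : P A B) :
    ∀ (α : Stream' A) (n : ℕ), ∃ m, ∀ β, Agree m α β →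
      Agree n (eatInf p α) (eatInf p β) := by
  suffices h : ∀ (n : ℕ) (p : P A B) (α : Stream' A), ∃ m, ∀ β, Agree m α β →
      Agree n (eatInf p α) (eatInf p β) from fun α n => h n p α
  intro n
  induction n with
  | zero => exact fun p α => ⟨0, fun β _ i hi => absurd hi (Nat.not_lt_zero i)⟩
  | succ n ih =>
    intro p α
    obtain ⟨m₀, hdrop, h₀⟩ := eat_cont (Pout p) α
    obtain ⟨m₁, h₁⟩ := ih (eat (Pout p) α).1.2 (α.drop m₀)
    refine ⟨m₀ + m₁, fun β hβ i hi => ?_⟩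
    have hagree0 : Agree m₀ α β := fun i hi => hβ i (by omega)
    obtain ⟨heq1, heq2⟩ := h₀ β hagree0
    have htails : Agree n (eatInf (eat (Pout p) α).1.2 (α.drop m₀))
        (eatInf (eat (Pout p) α).1.2 (β.drop m₀)) :=
      h₁ (β.drop m₀) (agree_drop hβ)
    rw [eatInf_head p α, eatInf_head p β, heq1, heq2, hdrop]
    match i, hi with
    | 0, _ => rfl
    | i + 1, hi =>
      show (eatInf _ _).get i = (eatInf _ _).get i
      exact htails i (Nat.lt_of_succ_lt_succ hi)

end StreamProc
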